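/- Let M/K_𝔭 be an unramified extension of local fields of characteristic p with residue field extension generated by Frobenius δ̄, and let L = M(ξ^{1/e}) be a totally tamely ramified cyclic degree-e extension of M with ζ ∈ M a primitive e-th root of unity. If the full extension L/K_𝔭 is abelian, then ζ lies in K_𝔭 (equivalently, the residue field κ of K_𝔭 contains a primitive e-th root of unity). -/

import Mathlib

/-- let `L/K` be an abelian Galois extension of local fields of residue
characteristic `p` (the valuation `v` on `L` is Galois-invariant), `M` an intermediate field,
`ζ ∈ M` a primitive `e`-th root of unity with `e` prime to `p`, `u` an `e`-th root of an
element `ξ ∈ M` (a uniformizer of the maximal unramified subextension situation), and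
`σ ∈ Gal(L/M)` an inertial automorphism with `σ(u) = ζ·u`.  If `δ` is a lift of the Frobenius
so that `σ` and `δ` generate `Gal(L/K)`, then `ζ` lies in `K`.  The henselian property of the
local field (roots of unity of order prime to `p` are distinguished modulo the maximal ideal)
is recorded as the hypothesis `hhensel`, and inertiality of `σ` as `hσin`. -/
theorem stmt_5 (p e : ℕ) (hp : p.Prime) (he : ¬ p ∣ e) (he0 : 0 < e)
    (K L : Type*) [Field K] [Field L] [Algebra K L] [CharP K p]
    [FiniteDimensional K L] [IsGalois K L]
    (hab : ∀ σ τ : L ≃ₐ[K] L, σ * τ = τ * σ)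
    (M : IntermediateField K L)
    (Γ : Type*) [LinearOrderedCommGroupWithZero Γ]
    (v : Valuation L Γ)
    (hGal : ∀ (τ : L ≃ₐ[K] L) (x : L), v (τ x) = v x)
    (hhensel : ∀ η : L, η ^ e = 1 → v (η - 1) < 1 → η = 1)
    (ζ : L) (hζM : ζ ∈ M) (hζ : IsPrimitiveRoot ζ e)
    (ξ : L) (hξM : ξ ∈ M) (u : L) (hu : u ^ e = ξ) (hu0 : u ≠ 0)
    (σ δ : L ≃ₐ[K] L) (hσM : ∀ x ∈ M, σ x = x) (hσu : σ u = ζ * u)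
    (hσin : ∀ x : L, v x ≤ 1 → v (σ x - x) < 1)
    (hgen : Subgroup.closure {σ, δ} = ⊤) :
    ζ ∈ (⊥ : IntermediateField K L) := by
  have hζ0 : ζ ≠ 0 := hζ.ne_zero he0.ne'
  have hζe : ζ ^ e = 1 := hζ.pow_eq_one
  -- key: δ fixes ζ
  have hδζ : δ ζ = ζ := by
    set η : L := δ ζ / ζ with hη
    have hηe : η ^ e = 1 := by
      rw [hη, div_pow, ← map_pow, hζe, map_one, one_div, inv_eq_one]
    set t : L := δ u / u with ht
    have hvu : v u ≠ 0 := (Valuation.ne_zero_iff v).mpr hu0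
    have hvt : v t = 1 := by
      rw [ht, map_div₀, hGal δ u, div_self hvu]
    -- σ t = η * t
    have hcomm : σ (δ u) = δ (σ u) := by
      have := hab σ δ
      have h2 : (σ * δ) u = (δ * σ) u := by rw [this]
      simpa [AlgEquiv.mul_apply] using h2
    have hσt : σ t = η * t := by
      rw [ht, map_div₀, hcomm, hσu, map_mul, hη]
      field_simp
    have hlt : v (η - 1) < 1 := by
      have h1 : v (σ t - t) < 1 := hσin t hvt.le
      have h2 : σ t - t = (η - 1) * t := by rw [hσt]; ring
      rw [h2, map_mul, hvt, mul_one] at h1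
      exact h1
    have := hhensel η hηe hlt
    field_simp [hη] at this
    rwa [hη, div_eq_one_iff_eq hζ0] at this
  have hσζ : σ ζ = ζ := hσM ζ hζM
  have hfix : ∀ τ : L ≃ₐ[K] L, τ ζ = ζ := by
    intro τ
    have hτ : τ ∈ Subgroup.closure ({σ, δ} : Set (L ≃ₐ[K] L)) := by
      rw [hgen]; exact Subgroup.mem_top τ
    induction hτ using Subgroup.closure_induction with
    | mem g hg =>
      rcases hg with rfl | rfl
      · exact hσζ
      · exact hδζ
    | one => rfl
    | mul g h _ _ hg hh => rw [AlgEquiv.mul_apply, hh, hg]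
    | inv g _ hg =>
      have h1 : g (g⁻¹ ζ) = ζ := by
        rw [show g (g⁻¹ ζ) = (g * g⁻¹) ζ from rfl, mul_inv_cancel]; rfl
      exact g.injective (h1.trans hg.symm)
  rw [← IsGalois.fixedField_fixingSubgroup (⊥ : IntermediateField K L)]
  exact fun g => hfix g.1
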